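/- arXiv:1902.04460 — 2 statements merged into one kernel-verified Lean document; each statement's English description precedes it below -/
import Mathlib

section
/- Let Γ be a discrete subgroup of E(n), and let (G, V) be a finite index cocompact translation pair of Γ. Then N_Γ(r) = Θ(N_G(r)) = Θ(N_G^V(r)) = Θ(r^{dim V}), where dim V is the dimension of the affine subspace V. In particular, the counting function N_Γ grows polynomially of exact order dim V. -/
open Metric Filter MeasureTheory Asymptotics

noncomputable section

/-- `ℝⁿ` as a Euclidean space. -/
abbrev En (n : ℕ) := EuclideanSpace ℝ (Fin n)

/-- The Euclidean group `E(n)`, i.e. the isometry group of `ℝⁿ`. -/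
abbrev Isom (n : ℕ) := En n ≃ᵢ En n

/-- The translation part `tran γ = γ 0` of a Euclidean isometry
(for `γ : x ↦ Ax + a` this is `a`). -/
def tran {n : ℕ} (γ : Isom n) : En n := γ 0

/-- The orthogonal part `ort γ` of a Euclidean isometry, as a self-map of `ℝⁿ`
(for `γ : x ↦ Ax + a` this is the map `x ↦ Ax`). -/
def ort {n : ℕ} (γ : Isom n) : En n → En n := fun x => γ x - γ 0

/-- A subgroup `Γ ≤ E(n)` is discrete (in the topology of `O(n) × ℝⁿ`) if and only if the
identity is isolated in `Γ`; the metric `sup_{‖x‖ ≤ 1} ‖γ x - x‖` induces that topology. -/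
def IsDiscreteSubgroup {n : ℕ} (Γ : Subgroup (Isom n)) : Prop :=
  ∃ ε > 0, ∀ γ ∈ Γ, γ ≠ 1 → ∃ x : En n, ‖x‖ ≤ 1 ∧ ε ≤ dist (γ x) x

/-- The subgroup of all translations of `ℝⁿ` inside the isometry group; the translation
subgroup `Γ_T` of a subgroup `Γ ≤ E(n)` is then `Γ ⊓ Translations n`. -/
def Translations (n : ℕ) : Subgroup (Isom n) where
  carrier := {γ : Isom n | ∀ x : En n, γ x = x + γ 0}
  one_mem' := by intro x; simp
  mul_mem' := by
    intro a b ha hb x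
    show a (b x) = x + a (b 0)
    rw [hb x, ha (x + b 0), hb 0, ha (0 + b 0)]
    abel
  inv_mem' := by
    intro a ha x
    show a.symm x = x + a.symm 0
    apply a.injective
    have h0 : a (a.symm 0) = 0 := a.apply_symm_apply 0
    rw [a.apply_symm_apply, ha (x + a.symm 0)]
    have hsum : a.symm 0 + a 0 = 0 := by
      have := ha (a.symm 0); rw [h0] at this; exact this.symm
    rw [add_assoc, hsum, add_zero]

/-- `(G, V)` is a cocompact translation pair of `Γ`: `G ≤ Γ`, `V` is a (nonempty) affine
subspace of `ℝⁿ` with `GV = V`, every `g ∈ G` restricts to `V` as a translation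
(by the vector `v = tran_V(g)`), and `V/G` is compact. -/
structure IsCocompactTranslationPair {n : ℕ} (Γ G : Subgroup (Isom n))
    (V : AffineSubspace ℝ (En n)) : Prop where
  le : G ≤ Γ
  nonempty : (V : Set (En n)).Nonempty
  invariant : ∀ g ∈ G, ∀ x ∈ (V : Set (En n)), g x ∈ (V : Set (En n))
  translation : ∀ g ∈ G, ∃ v : En n, ∀ x ∈ (V : Set (En n)), g x = x + v
  cocompact : ∃ K : Set (En n), IsCompact K ∧ K ⊆ (V : Set (En n)) ∧
    ∀ x ∈ (V : Set (En n)), ∃ g ∈ G, g x ∈ K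

/-- `N_Γ(r)`: the number of `γ ∈ Γ` with `|tran γ| ≤ r`. -/
def NCount {n : ℕ} (Γ : Subgroup (Isom n)) (r : ℝ) : ℕ :=
  {γ : Isom n | γ ∈ Γ ∧ ‖tran γ‖ ≤ r}.ncard

/-- `N_G^V(r)`: the number of `γ ∈ G` whose translation vector `tran_V γ` on `V`
satisfies `|tran_V γ| ≤ r`. -/
def NVCount {n : ℕ} (G : Subgroup (Isom n)) (V : AffineSubspace ℝ (En n)) (r : ℝ) : ℕ :=
  {γ : Isom n | γ ∈ G ∧ ∃ v : En n,
    (∀ x ∈ (V : Set (En n)), γ x = x + v) ∧ ‖v‖ ≤ r}.ncard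

/-- `Λ_G(r)`: the number of distinct orthogonal parts `ort γ` over `γ ∈ G` with
`|tran γ| ≤ r`. -/
def LamCount {n : ℕ} (G : Subgroup (Isom n)) (r : ℝ) : ℕ :=
  {f : En n → En n | ∃ γ, γ ∈ G ∧ ‖tran γ‖ ≤ r ∧ f = ort γ}.ncard

/-- `Λ_G^V(r)`: the number of distinct orthogonal parts `ort γ` over `γ ∈ G` with
`|tran_V γ| ≤ r`. -/
def LamVCount {n : ℕ} (G : Subgroup (Isom n)) (V : AffineSubspace ℝ (En n)) (r : ℝ) : ℕ :=
  {f : En n → En n | ∃ γ, γ ∈ G ∧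
    (∃ v : En n, (∀ x ∈ (V : Set (En n)), γ x = x + v) ∧ ‖v‖ ≤ r) ∧ f = ort γ}.ncard


section AuxiliaryLemmas
open Set ENNReal


theorem finite_of_separated {α : Type*} [MetricSpace α] {s : Set α} (hs : TotallyBounded s)
    {ε : ℝ} (hε : 0 < ε) (h : ∀ x ∈ s, ∀ y ∈ s, x ≠ y → ε ≤ dist x y) : s.Finite := by
  obtain ⟨t, htfin, hcov⟩ := (Metric.totallyBounded_iff.1 hs) (ε/2) (by positivity)
  have key : ∀ x : s, ∃ y ∈ t, (x : α) ∈ Metric.ball y (ε/2) := by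
    intro ⟨x, hx⟩; simpa using hcov hx
  choose f hf1 hf2 using key
  have : Finite t := htfin
  have hinj : Function.Injective (fun x : s => (⟨f x, hf1 x⟩ : t)) := by
    intro x y hxy
    simp only [Subtype.mk_eq_mk] at hxy
    by_contra hne
    have hne' : (x : α) ≠ (y : α) := fun hc => hne (Subtype.ext hc)
    have h1 := hf2 x
    have h2 := hf2 y
    rw [hxy] at h1
    have : dist (x : α) (y : α) < ε := by
      have := dist_triangle (x : α) (f y) (y : α)
      rw [Metric.mem_ball] at h1 h2
      rw [dist_comm ((y : α)) (f y)] at h2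
      linarith
    exact absurd (h x x.2 y y.2 hne') (by linarith)
  have : Finite s := Finite.of_injective _ hinj
  exact Set.toFinite s

theorem ncard_prod'' {α β : Type*} (s : Set α) (t : Set β) :
    (s ×ˢ t).ncard = s.ncard * t.ncard := by
  rw [← Nat.card_coe_set_eq, ← Nat.card_coe_set_eq, ← Nat.card_coe_set_eq,
    ← Nat.card_prod]
  exact Nat.card_congr (Equiv.Set.prod s t)


noncomputable def lin {n : ℕ} (γ : Isom n) : En n →L[ℝ] En n :=
  γ.toRealLinearIsometryEquiv.toLinearIsometry.toContinuousLinearMap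

theorem lin_apply {n : ℕ} (γ : Isom n) (x : En n) : γ x = lin γ x + γ 0 := by
  simp [lin]

theorem lin_norm_le {n : ℕ} (γ : Isom n) : ‖lin γ‖ ≤ 1 := by
  apply ContinuousLinearMap.opNorm_le_bound _ zero_le_one
  intro x
  simp only [lin, LinearIsometry.coe_toContinuousLinearMap, LinearIsometryEquiv.coe_toLinearIsometry, IsometryEquiv.toRealLinearIsometryEquiv_apply, one_mul]
  rw [← dist_eq_norm, γ.dist_eq, dist_zero_right]

example (n : ℕ) : ProperSpace ((En n →L[ℝ] En n) × En n) := by infer_instance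

theorem lin_injective {n : ℕ} {γ γ' : Isom n} (h1 : lin γ = lin γ') (h2 : γ 0 = γ' 0) :
    γ = γ' := by
  apply IsometryEquiv.ext
  intro x
  rw [lin_apply γ x, lin_apply γ' x, h1, h2]

theorem finite_tran_le {n : ℕ} {Γ : Subgroup (Isom n)} (hΓ : IsDiscreteSubgroup Γ) (R : ℝ) :
    {γ : Isom n | γ ∈ Γ ∧ ‖tran γ‖ ≤ R}.Finite := by
  rcases le_or_gt 0 R with hR | hR
  swap
  · convert Set.finite_empty
    ext γ; simp only [Set.mem_setOf_eq, Set.mem_empty_iff_false, iff_false, not_and, not_le]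
    intro _; exact lt_of_lt_of_le hR (norm_nonneg _)
  obtain ⟨ε, hε, hsep⟩ := hΓ
  set S := {γ : Isom n | γ ∈ Γ ∧ ‖tran γ‖ ≤ R} with hS
  set Φ : Isom n → (En n →L[ℝ] En n) × En n := fun γ => (lin γ, γ 0) with hΦ
  have hinj : Set.InjOn Φ S := by
    intro γ _ γ' _ h
    exact lin_injective (congrArg Prod.fst h) (congrArg Prod.snd h)
  -- separation
  have hsep' : ∀ a ∈ Φ '' S, ∀ b ∈ Φ '' S, a ≠ b → ε / (R + 2) ≤ dist a b := by
    rintro a ⟨γ, hγ, rfl⟩ b ⟨γ', hγ', rfl⟩ hab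
    have hne : γ' * γ⁻¹ ≠ 1 := by
      intro hc
      apply hab
      have : γ' = γ := by
        have := congrArg (fun h => h * γ) hc
        simpa [mul_assoc] using this
      rw [this]
    obtain ⟨x, hx1, hx2⟩ := hsep (γ' * γ⁻¹) (mul_mem hγ'.1 (inv_mem hγ.1)) hne
    set z := γ⁻¹ x with hz
    have hxz : x = γ z := (γ.apply_symm_apply x).symm
    have hhx : (γ' * γ⁻¹) x = γ' z := rfl
    have hzn : ‖z‖ ≤ 1 + R := by
      have : z = γ⁻¹ x := hz
      have h0 : (γ⁻¹ : Isom n) (γ 0) = 0 := γ.symm_apply_apply 0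
      calc ‖z‖ = dist z 0 := (dist_zero_right z).symm
        _ = dist ((γ⁻¹ : Isom n) x) ((γ⁻¹ : Isom n) (γ 0)) := by rw [h0]
        _ = dist x (γ 0) := IsometryEquiv.dist_eq _ _ _
        _ ≤ ‖x‖ + ‖γ 0‖ := dist_le_norm_add_norm x (γ 0)
        _ ≤ 1 + R := add_le_add hx1 hγ.2
    have key : ε ≤ dist (Φ γ') (Φ γ) * (R + 2) := by
      have hd1 : dist (lin γ') (lin γ) ≤ dist (Φ γ') (Φ γ) := by
        rw [Prod.dist_eq]; exact le_max_left _ _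
      have hd2 : dist (γ' 0) (γ 0) ≤ dist (Φ γ') (Φ γ) := by
        rw [Prod.dist_eq]; exact le_max_right _ _
      have hcalc : dist (γ' z) (γ z) ≤ dist (lin γ') (lin γ) * (1 + R) + dist (γ' 0) (γ 0) := by
        have e1 : γ' z - γ z = (lin γ' - lin γ) z + (γ' 0 - γ 0) := by
          rw [lin_apply γ' z, lin_apply γ z]
          simp only [ContinuousLinearMap.sub_apply]
          abel
        rw [dist_eq_norm, e1]
        calc ‖(lin γ' - lin γ) z + (γ' 0 - γ 0)‖
            ≤ ‖(lin γ' - lin γ) z‖ + ‖γ' 0 - γ 0‖ := norm_add_le _ _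
          _ ≤ ‖lin γ' - lin γ‖ * ‖z‖ + ‖γ' 0 - γ 0‖ := by
              gcongr; exact ContinuousLinearMap.le_opNorm _ _
          _ ≤ ‖lin γ' - lin γ‖ * (1 + R) + ‖γ' 0 - γ 0‖ := by
              gcongr
          _ = dist (lin γ') (lin γ) * (1 + R) + dist (γ' 0) (γ 0) := by
              rw [dist_eq_norm, dist_eq_norm]
      have hste : ε ≤ dist (γ' z) (γ z) := by
        calc ε ≤ dist ((γ' * γ⁻¹) x) x := hx2
          _ = dist (γ' z) (γ z) := by rw [hhx, ← hxz]
      have hD : 0 ≤ dist (Φ γ') (Φ γ) := dist_nonneg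
      calc ε ≤ dist (γ' z) (γ z) := hste
        _ ≤ dist (lin γ') (lin γ) * (1 + R) + dist (γ' 0) (γ 0) := hcalc
        _ ≤ dist (Φ γ') (Φ γ) * (1 + R) + dist (Φ γ') (Φ γ) := by gcongr
        _ = dist (Φ γ') (Φ γ) * (R + 2) := by ring
    have hR2 : (0:ℝ) < R + 2 := by linarith
    rw [div_le_iff₀ hR2, dist_comm]
    exact key
  have hbdd : Φ '' S ⊆ Metric.closedBall 0 (max 1 R) := by
    rintro a ⟨γ, hγ, rfl⟩
    rw [Metric.mem_closedBall, dist_zero_right]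
    rw [Prod.norm_def]
    apply max_le
    · exact le_trans (lin_norm_le γ) (le_max_left _ _)
    · exact le_trans hγ.2 (le_max_right _ _)
  have htb : TotallyBounded (Φ '' S) :=
    (isCompact_closedBall (0 : (En n →L[ℝ] En n) × En n) (max 1 R)).totallyBounded.subset hbdd
  have hfin : (Φ '' S).Finite :=
    finite_of_separated htb (by positivity) hsep'
  exact Set.Finite.of_finite_image hfin hinj


theorem count_bounds {d : ℕ} (S : Set (EuclideanSpace ℝ (Fin d)))
    {δ R : ℝ} (hδ : 0 < δ) (hR : 0 < R)
    (hsep : ∀ x ∈ S, ∀ y ∈ S, x ≠ y → δ ≤ dist x y)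
    (hdense : ∀ y : EuclideanSpace ℝ (Fin d), ∃ x ∈ S, dist y x ≤ R) :
    ∀ r : ℝ, R ≤ r →
      (r - R) ^ d / R ^ d ≤ ((S ∩ closedBall 0 r).ncard : ℝ) ∧
      ((S ∩ closedBall 0 r).ncard : ℝ) ≤ (r + δ) ^ d / (δ / 3) ^ d := by
  intro r hr
  have hr0 : (0:ℝ) ≤ r := le_trans hR.le hr
  have hfr : Module.finrank ℝ (EuclideanSpace ℝ (Fin d)) = d := finrank_euclideanSpace_fin
  set B := (volume : Measure (EuclideanSpace ℝ (Fin d))) (closedBall 0 1) with hB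
  have hB0 : B ≠ 0 := (measure_closedBall_pos volume (0:EuclideanSpace ℝ (Fin d)) one_pos).ne'
  have hBtop : B ≠ ⊤ := measure_closedBall_lt_top.ne
  set T := S ∩ closedBall (0:EuclideanSpace ℝ (Fin d)) r with hT
  have hTfin : T.Finite := by
    apply finite_of_separated ((isCompact_closedBall (0:EuclideanSpace ℝ (Fin d))
      r).totallyBounded.subset inter_subset_right) hδ
    intro x hx y hy hxy
    exact hsep x hx.1 y hy.1 hxy
  set F := hTfin.toFinset with hF
  have hmemF : ∀ x, x ∈ F ↔ x ∈ T := fun x => Set.Finite.mem_toFinset hTfin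
  have hcardF : F.card = T.ncard := (Set.ncard_eq_toFinset_card T hTfin).symm
  constructor
  · -- lower bound
    have hcov : closedBall (0:EuclideanSpace ℝ (Fin d)) (r - R) ⊆ ⋃ x ∈ F, closedBall x R := by
      intro y hy
      obtain ⟨x, hxS, hxy⟩ := hdense y
      have hxB : x ∈ T := by
        refine ⟨hxS, ?_⟩
        rw [mem_closedBall, dist_zero_right] at hy ⊢
        calc ‖x‖ = dist x 0 := (dist_zero_right x).symm
          _ ≤ dist x y + dist y 0 := dist_triangle _ _ _
          _ = dist y x + ‖y‖ := by rw [dist_comm, dist_zero_right]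
          _ ≤ R + (r - R) := add_le_add hxy hy
          _ = r := by ring
      refine Set.mem_biUnion ((hmemF x).2 hxB) ?_
      rw [mem_closedBall', dist_comm]
      exact hxy
    have hmeas : ENNReal.ofReal ((r - R) ^ d) * B ≤ (F.card : ℝ≥0∞) * (ENNReal.ofReal (R ^ d) * B) := by
      calc ENNReal.ofReal ((r - R) ^ d) * B
          = volume (closedBall (0:EuclideanSpace ℝ (Fin d)) (r - R)) := by
            rw [Measure.addHaar_closedBall' volume _ (by linarith : (0:ℝ) ≤ r - R), hfr]
        _ ≤ volume (⋃ x ∈ F, closedBall x R) := measure_mono hcov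
        _ ≤ ∑ x ∈ F, volume (closedBall x R) := measure_biUnion_finset_le F _
        _ = (F.card : ℝ≥0∞) * (ENNReal.ofReal (R ^ d) * B) := by
            rw [Finset.sum_congr rfl (fun x _ => by
              rw [Measure.addHaar_closedBall' volume x hR.le]
              try rw [hfr])]
            rw [Finset.sum_const, nsmul_eq_mul]
            try rw [hfr]
    have h2 : ENNReal.ofReal ((r - R) ^ d) ≤ (F.card : ℝ≥0∞) * ENNReal.ofReal (R ^ d) := by
      rw [← ENNReal.mul_le_mul_iff_left hB0 hBtop, mul_assoc]
      exact hmeas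
    have h3 : ENNReal.ofReal ((r - R) ^ d) ≤ ENNReal.ofReal ((T.ncard : ℝ) * R ^ d) := by
      rw [ENNReal.ofReal_mul (by positivity)]
      rw [ENNReal.ofReal_natCast] at *
      rwa [← hcardF]
    have h4 : (r - R) ^ d ≤ (T.ncard : ℝ) * R ^ d :=
      (ENNReal.ofReal_le_ofReal_iff (by positivity)).1 h3
    rw [div_le_iff₀ (by positivity)]
    exact h4
  · -- upper bound
    have hdisj : (F : Set (EuclideanSpace ℝ (Fin d))).PairwiseDisjoint
        (fun x => closedBall x (δ / 3)) := by
      intro x hx y hy hxy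
      apply Metric.closedBall_disjoint_closedBall
      have : δ ≤ dist x y := by
        apply hsep x _ y _ hxy
        · exact ((hmemF x).1 hx).1
        · exact ((hmemF y).1 hy).1
      linarith
    have hsub : (⋃ x ∈ F, closedBall x (δ / 3)) ⊆
        closedBall (0:EuclideanSpace ℝ (Fin d)) (r + δ) := by
      intro y hy
      obtain ⟨x, hx, hyx⟩ := Set.mem_iUnion₂.1 hy
      have hxT := (hmemF x).1 hx
      rw [mem_closedBall] at hyx ⊢
      calc dist y 0 ≤ dist y x + dist x 0 := dist_triangle _ _ _
        _ ≤ δ / 3 + r := by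
            have := hxT.2; rw [mem_closedBall] at this; exact add_le_add hyx this
        _ ≤ r + δ := by linarith
    have hmeas : (F.card : ℝ≥0∞) * (ENNReal.ofReal ((δ/3) ^ d) * B) ≤
        ENNReal.ofReal ((r + δ) ^ d) * B := by
      calc (F.card : ℝ≥0∞) * (ENNReal.ofReal ((δ/3) ^ d) * B)
          = ∑ x ∈ F, volume (closedBall x (δ/3)) := by
            rw [Finset.sum_congr rfl (fun x _ => by
              rw [Measure.addHaar_closedBall' volume x (by positivity : (0:ℝ) ≤ δ/3)]
              try rw [hfr])]
            rw [Finset.sum_const, nsmul_eq_mul]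
            try rw [hfr]
        _ = volume (⋃ x ∈ F, closedBall x (δ/3)) :=
            (measure_biUnion_finset hdisj (fun x _ => measurableSet_closedBall)).symm
        _ ≤ volume (closedBall (0:EuclideanSpace ℝ (Fin d)) (r + δ)) := measure_mono hsub
        _ = ENNReal.ofReal ((r + δ) ^ d) * B := by
            rw [Measure.addHaar_closedBall' volume _ (by positivity : (0:ℝ) ≤ r + δ), hfr]
    have h2 : (F.card : ℝ≥0∞) * ENNReal.ofReal ((δ/3) ^ d) ≤ ENNReal.ofReal ((r + δ) ^ d) := by
      rw [← ENNReal.mul_le_mul_iff_left hB0 hBtop, mul_assoc]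
      exact hmeas
    have h3 : ENNReal.ofReal ((T.ncard : ℝ) * (δ/3) ^ d) ≤ ENNReal.ofReal ((r + δ) ^ d) := by
      rw [ENNReal.ofReal_mul (by positivity)]
      rw [ENNReal.ofReal_natCast] at *
      rwa [← hcardF]
    have h4 : (T.ncard : ℝ) * (δ/3) ^ d ≤ (r + δ) ^ d :=
      (ENNReal.ofReal_le_ofReal_iff (by positivity)).1 h3
    rw [le_div_iff₀ (by positivity)]
    exact h4



theorem polyBound_sandwich {f g : ℝ → ℝ} {d : ℕ} {c m : ℝ} (hc : 0 ≤ c) (hm : 0 < m)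
    (hg : ∃ a b r₀ : ℝ, 0 < a ∧ 0 < b ∧ 1 ≤ r₀ ∧ ∀ r, r₀ ≤ r → a * r^d ≤ g r ∧ g r ≤ b * r^d)
    (hlow : ∀ r, 1 ≤ r → g (r - c) ≤ f r)
    (hhi : ∀ r, 1 ≤ r → f r ≤ m * g (r + c)) :
    ∃ a b r₀ : ℝ, 0 < a ∧ 0 < b ∧ 1 ≤ r₀ ∧ ∀ r, r₀ ≤ r → a * r^d ≤ f r ∧ f r ≤ b * r^d := by
  obtain ⟨a, b, r₀, ha, hb, hr₀, hbd⟩ := hg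
  refine ⟨a / 2^d, m * b * 2^d, max (r₀ + c) (2*c + 1), by positivity, by positivity,
    le_max_of_le_left (by linarith), ?_⟩
  intro r hr
  have h1 : r₀ + c ≤ r := le_trans (le_max_left _ _) hr
  have h2 : 2*c + 1 ≤ r := le_trans (le_max_right _ _) hr
  have hr1 : 1 ≤ r := by linarith
  have hrc : r₀ ≤ r - c := by linarith
  have hrhalf : r / 2 ≤ r - c := by linarith
  have hrhalf0 : 0 ≤ r / 2 := by linarith
  constructor
  · have hlow1 : a * (r - c)^d ≤ g (r - c) := (hbd _ hrc).1
    have hmono : (r/2)^d ≤ (r - c)^d := pow_le_pow_left₀ hrhalf0 hrhalf d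
    have : a / 2^d * r^d = a * (r/2)^d := by
      rw [div_pow]; ring
    rw [this]
    calc a * (r/2)^d ≤ a * (r - c)^d := by
          exact mul_le_mul_of_nonneg_left hmono ha.le
      _ ≤ g (r - c) := hlow1
      _ ≤ f r := hlow r hr1
  · have hhi1 : g (r + c) ≤ b * (r + c)^d := (hbd _ (by linarith)).2
    have hmono : (r + c)^d ≤ (2*r)^d := pow_le_pow_left₀ (by linarith) (by linarith) d
    calc f r ≤ m * g (r + c) := hhi r hr1
      _ ≤ m * (b * (r + c)^d) := mul_le_mul_of_nonneg_left hhi1 hm.le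
      _ ≤ m * (b * (2*r)^d) := by
          apply mul_le_mul_of_nonneg_left (mul_le_mul_of_nonneg_left hmono hb.le) hm.le
      _ = m * b * 2^d * r^d := by rw [mul_pow]; ring

theorem isTheta_of_polyBound {f : ℝ → ℝ} {d : ℕ}
    (h : ∃ a b r₀ : ℝ, 0 < a ∧ 0 < b ∧ 1 ≤ r₀ ∧ ∀ r, r₀ ≤ r → a * r^d ≤ f r ∧ f r ≤ b * r^d) :
    f =Θ[atTop] (fun r : ℝ => r ^ d) := by
  obtain ⟨a, b, r₀, ha, hb, hr₀, hbd⟩ := h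
  constructor
  · rw [Asymptotics.isBigO_iff]
    refine ⟨b, Filter.eventually_atTop.2 ⟨r₀, fun r hr => ?_⟩⟩
    have h1 := (hbd r hr).1
    have h2 := (hbd r hr).2
    have hrpos : (0:ℝ) < r := lt_of_lt_of_le one_pos (le_trans hr₀ hr)
    have hpd : (0:ℝ) ≤ r^d := by positivity
    have hf0 : 0 ≤ f r := le_trans (by positivity) h1
    rw [Real.norm_eq_abs, Real.norm_eq_abs, abs_of_nonneg hf0, abs_of_nonneg hpd]
    exact h2
  · rw [Asymptotics.isBigO_iff]
    refine ⟨a⁻¹, Filter.eventually_atTop.2 ⟨r₀, fun r hr => ?_⟩⟩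
    have h1 := (hbd r hr).1
    have hrpos : (0:ℝ) < r := lt_of_lt_of_le one_pos (le_trans hr₀ hr)
    have hpd : (0:ℝ) ≤ r^d := by positivity
    have hf0 : 0 ≤ f r := le_trans (by positivity) h1
    rw [Real.norm_eq_abs, Real.norm_eq_abs, abs_of_nonneg hf0, abs_of_nonneg hpd]
    calc r^d ≤ f r / a := by rwa [mul_comm, ← le_div_iff₀ ha] at h1
      _ = a⁻¹ * f r := by rw [div_eq_inv_mul]


end AuxiliaryLemmas

set_option maxHeartbeats 1600000 in
/-- For a finite index cocompact translation pair `(G, V)` of a discrete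
`Γ ≤ E(n)`: `N_Γ(r) = Θ(N_G(r)) = Θ(N_G^V(r)) = Θ(r^{dim V})`. -/
theorem counting_growth_theta {n : ℕ} (Γ G : Subgroup (Isom n))
    (V : AffineSubspace ℝ (En n)) (hΓ : IsDiscreteSubgroup Γ)
    (hpair : IsCocompactTranslationPair Γ G V) (hfin : G.relIndex Γ ≠ 0) :
    (fun r : ℝ => (NCount Γ r : ℝ)) =Θ[atTop] (fun r : ℝ => (NCount G r : ℝ)) ∧
    (fun r : ℝ => (NCount G r : ℝ)) =Θ[atTop] (fun r : ℝ => (NVCount G V r : ℝ)) ∧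
    (fun r : ℝ => (NVCount G V r : ℝ)) =Θ[atTop]
      (fun r : ℝ => r ^ (Module.finrank ℝ V.direction)) := by
  classical
  obtain ⟨p, hp⟩ := hpair.nonempty
  set d := Module.finrank ℝ V.direction with hd
  set vg : Isom n → En n := fun γ => γ p - p with hvg
  -- every g ∈ G acts on V as translation by vg g
  have hvG : ∀ g ∈ G, ∀ x ∈ (V : Set (En n)), g x = x + vg g := by
    intro g hg x hx
    obtain ⟨v, hv⟩ := hpair.translation g hg
    have h1 := hv p hp
    have h2 := hv x hx
    rw [h2]
    have : vg g = v := by rw [hvg]; simp only; rw [h1]; abel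
    rw [this]
  -- norm comparisons
  have htv1 : ∀ γ : Isom n, ‖γ 0‖ ≤ ‖vg γ‖ + 2 * ‖p‖ := by
    intro γ
    have hdpp : dist (γ 0) (γ p) = ‖p‖ := by rw [γ.dist_eq, dist_zero_left]
    calc ‖γ 0‖ = dist (γ 0) 0 := (dist_zero_right _).symm
      _ ≤ dist (γ 0) (γ p) + dist (γ p) 0 := dist_triangle _ _ _
      _ = ‖p‖ + ‖γ p - p + p‖ := by rw [hdpp, dist_zero_right, sub_add_cancel]
      _ ≤ ‖p‖ + (‖γ p - p‖ + ‖p‖) := by gcongr; exact norm_add_le _ _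
      _ = ‖vg γ‖ + 2 * ‖p‖ := by rw [hvg]; ring
  have htv2 : ∀ γ : Isom n, ‖vg γ‖ ≤ ‖γ 0‖ + 2 * ‖p‖ := by
    intro γ
    have hdpp : dist (γ p) (γ 0) = ‖p‖ := by rw [γ.dist_eq, dist_zero_right]
    calc ‖vg γ‖ = ‖γ p - p‖ := by rw [hvg]
      _ ≤ ‖γ p - γ 0‖ + ‖γ 0 - p‖ := by
          have : γ p - p = (γ p - γ 0) + (γ 0 - p) := by abel
          rw [this]; exact norm_add_le _ _
      _ ≤ ‖p‖ + (‖γ 0‖ + ‖p‖) := by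
          gcongr
          · rw [← dist_eq_norm]; exact le_of_eq hdpp
          · exact norm_sub_le _ _
      _ = ‖γ 0‖ + 2 * ‖p‖ := by ring
  -- algebra of vg on G
  have hvg_one : vg 1 = 0 := by rw [hvg]; simp
  have hvg_mul : ∀ g ∈ G, ∀ h ∈ G, vg (g * h) = vg g + vg h := by
    intro g hg h hh
    have hhp : h p ∈ (V : Set (En n)) := hpair.invariant h hh p hp
    have h1 : (g * h) p = g (h p) := rfl
    have h2 : g (h p) = h p + vg g := hvG g hg (h p) hhp
    have h3 : h p = p + vg h := hvG h hh p hp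
    show (g * h) p - p = vg g + vg h
    rw [h1, h2, h3]; abel
  have hvg_inv : ∀ g ∈ G, vg g⁻¹ = - vg g := by
    intro g hg
    have := hvg_mul g hg g⁻¹ (inv_mem hg)
    rw [mul_inv_cancel, hvg_one] at this
    exact eq_neg_of_add_eq_zero_right this.symm
  have hvg_dir : ∀ g ∈ G, vg g ∈ V.direction := by
    intro g hg
    have : g p ∈ (V : Set (En n)) := hpair.invariant g hg p hp
    have h2 := AffineSubspace.vsub_mem_direction this hp
    simpa [hvg] using h2
  -- the lattice of translation vectors
  set Lset : Set (En n) := {w | ∃ g ∈ G, vg g = w} with hLset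
  have hL0 : (0 : En n) ∈ Lset := ⟨1, one_mem G, hvg_one⟩
  have hLsub : ∀ w₁ ∈ Lset, ∀ w₂ ∈ Lset, w₁ - w₂ ∈ Lset := by
    rintro w₁ ⟨g₁, hg₁, rfl⟩ w₂ ⟨g₂, hg₂, rfl⟩
    refine ⟨g₁ * g₂⁻¹, mul_mem hg₁ (inv_mem hg₂), ?_⟩
    rw [hvg_mul g₁ hg₁ g₂⁻¹ (inv_mem hg₂), hvg_inv g₂ hg₂]
    abel
  have hLdir : ∀ w ∈ Lset, w ∈ V.direction := by
    rintro w ⟨g, hg, rfl⟩; exact hvg_dir g hg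
  -- the counting sets
  set c : ℝ := 2 * ‖p‖ with hc
  have hc0 : 0 ≤ c := by positivity
  set sΓ : ℝ → Set (Isom n) := fun r => {γ | γ ∈ Γ ∧ ‖tran γ‖ ≤ r} with hsΓ
  set sG : ℝ → Set (Isom n) := fun r => {γ | γ ∈ G ∧ ‖tran γ‖ ≤ r} with hsG
  set sNV : ℝ → Set (Isom n) := fun r => {γ | γ ∈ G ∧ ‖vg γ‖ ≤ r} with hsNV
  have htran : ∀ γ : Isom n, tran γ = γ 0 := fun _ => rfl
  have hfinΓ : ∀ r, (sΓ r).Finite := fun r => finite_tran_le hΓ r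
  have hsGΓ : ∀ r, sG r ⊆ sΓ r := fun r γ hγ => ⟨hpair.le hγ.1, hγ.2⟩
  have hfinG : ∀ r, (sG r).Finite := fun r => (hfinΓ r).subset (hsGΓ r)
  have hsNVΓ : ∀ r, sNV r ⊆ sΓ (r + c) := by
    intro r γ hγ
    refine ⟨hpair.le hγ.1, ?_⟩
    rw [htran]
    calc ‖γ 0‖ ≤ ‖vg γ‖ + 2 * ‖p‖ := htv1 γ
      _ ≤ r + c := by rw [hc]; have := hγ.2; linarith
  have hfinNV : ∀ r, (sNV r).Finite := fun r => (hfinΓ (r + c)).subset (hsNVΓ r)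
  have hLball : ∀ r : ℝ, Lset ∩ Metric.closedBall 0 r = vg '' (sNV r) := by
    intro r
    ext w
    constructor
    · rintro ⟨⟨g, hg, rfl⟩, hball⟩
      rw [Metric.mem_closedBall, dist_zero_right] at hball
      exact ⟨g, ⟨hg, hball⟩, rfl⟩
    · rintro ⟨g, ⟨hg, hn⟩, rfl⟩
      exact ⟨⟨g, hg, rfl⟩, by rwa [Metric.mem_closedBall, dist_zero_right]⟩
  have hfinL : ∀ r : ℝ, (Lset ∩ Metric.closedBall 0 r).Finite := by
    intro r; rw [hLball r]; exact ((hfinNV r).image vg)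
  -- separation constant for Lset
  have hδ : ∃ δ : ℝ, 0 < δ ∧ ∀ w ∈ Lset, w ≠ 0 → δ ≤ ‖w‖ := by
    have hfin1 : ((Lset ∩ Metric.closedBall 0 1) \ {0}).Finite := (hfinL 1).diff
    rcases ((Lset ∩ Metric.closedBall 0 1) \ {0}).eq_empty_or_nonempty with hemp | hne
    · refine ⟨1, one_pos, fun w hw hw0 => ?_⟩
      by_contra hlt
      push_neg at hlt
      have : w ∈ (Lset ∩ Metric.closedBall 0 1) \ {0} :=
        ⟨⟨hw, by rw [Metric.mem_closedBall, dist_zero_right]; linarith⟩, hw0⟩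
      rw [hemp] at this
      exact this
    · obtain ⟨w₀, hw₀, hmin⟩ := Set.exists_min_image _ (fun w => ‖w‖) hfin1 hne
      have hw₀0 : w₀ ≠ 0 := hw₀.2
      have hδpos : 0 < ‖w₀‖ := norm_pos_iff.2 hw₀0
      refine ⟨‖w₀‖, hδpos, fun w hw hw0 => ?_⟩
      rcases le_or_gt ‖w‖ 1 with h1 | h1
      · exact hmin w ⟨⟨hw, by rwa [Metric.mem_closedBall, dist_zero_right]⟩, hw0⟩
      · have : ‖w₀‖ ≤ 1 := by
          have := hw₀.1.2; rwa [Metric.mem_closedBall, dist_zero_right] at this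
        linarith
  obtain ⟨δ, hδpos, hδsep⟩ := hδ
  -- density constant
  have hR : ∃ R : ℝ, 1 ≤ R ∧ ∀ u : En n, u ∈ V.direction → ∃ w ∈ Lset, ‖u - w‖ ≤ R := by
    obtain ⟨K, hKcomp, hKV, hKcov⟩ := hpair.cocompact
    obtain ⟨R₁, hR₁⟩ := hKcomp.isBounded.subset_closedBall p
    refine ⟨max R₁ 1, le_max_right _ _, fun u hu => ?_⟩
    have hx : u + p ∈ (V : Set (En n)) := by
      have := AffineSubspace.vadd_mem_of_mem_direction hu hp
      simpa using this
    obtain ⟨g, hg, hgx⟩ := hKcov (u + p) hx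
    have hgx2 : g (u + p) = (u + p) + vg g := hvG g hg (u + p) hx
    have hdist : dist (g (u + p)) p ≤ R₁ := by
      have := hR₁ hgx
      rwa [Metric.mem_closedBall] at this
    refine ⟨- vg g, ⟨g⁻¹, inv_mem hg, hvg_inv g hg⟩, ?_⟩
    have : u - (- vg g) = (u + p + vg g) - p := by abel
    rw [this, ← hgx2]
    calc ‖g (u + p) - p‖ = dist (g (u + p)) p := (dist_eq_norm _ _).symm
      _ ≤ R₁ := hdist
      _ ≤ max R₁ 1 := le_max_left _ _
  obtain ⟨R, hR1, hRdense⟩ := hR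
  have hRpos : 0 < R := lt_of_lt_of_le one_pos hR1
  -- transport to Euclidean space
  set e := (stdOrthonormalBasis ℝ V.direction).repr with he
  set SE : Set (EuclideanSpace ℝ (Fin d)) :=
    {y | ∃ w : V.direction, (w : En n) ∈ Lset ∧ e w = y} with hSE
  set ψ : EuclideanSpace ℝ (Fin d) → En n := fun y => ((e.symm y : V.direction) : En n) with hψ
  have hψinj : Function.Injective ψ := by
    intro y₁ y₂ h
    have h2 : (e.symm y₁ : V.direction) = e.symm y₂ := Subtype.ext h
    have := congrArg e h2
    simpa using this
  have hψe : ∀ u : V.direction, ψ (e u) = (u : En n) := by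
    intro u; rw [hψ]; simp
  have hcoenorm : ∀ u : V.direction, ‖(u : En n)‖ = ‖u‖ := fun u => rfl
  have hψnorm : ∀ y, ‖ψ y‖ = ‖y‖ := by
    intro y
    rw [hψ]
    simp only
    rw [hcoenorm]
    simp
  have hSEball : ∀ r : ℝ, Lset ∩ Metric.closedBall 0 r = ψ '' (SE ∩ Metric.closedBall 0 r) := by
    intro r
    ext w
    constructor
    · rintro ⟨hwL, hball⟩
      rw [Metric.mem_closedBall, dist_zero_right] at hball
      refine ⟨e ⟨w, hLdir w hwL⟩, ⟨⟨⟨w, hLdir w hwL⟩, hwL, rfl⟩, ?_⟩, hψe _⟩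
      rw [Metric.mem_closedBall, dist_zero_right]
      have : ‖e ⟨w, hLdir w hwL⟩‖ = ‖(⟨w, hLdir w hwL⟩ : V.direction)‖ := e.norm_map _
      rw [this, ← hcoenorm]
      exact hball
    · rintro ⟨y, ⟨⟨u, huL, rfl⟩, hball⟩, rfl⟩
      rw [Metric.mem_closedBall, dist_zero_right] at hball
      refine ⟨by rwa [hψe], ?_⟩
      rw [Metric.mem_closedBall, dist_zero_right, hψnorm]
      exact hball
  have hcardeq : ∀ r : ℝ, (Lset ∩ Metric.closedBall 0 r).ncard
      = (SE ∩ Metric.closedBall 0 r).ncard := by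
    intro r
    rw [hSEball r, Set.ncard_image_of_injective _ hψinj]
  -- separation and density for SE
  have hSEsep : ∀ x ∈ SE, ∀ y ∈ SE, x ≠ y → δ ≤ dist x y := by
    rintro x ⟨u₁, hu₁, rfl⟩ y ⟨u₂, hu₂, rfl⟩ hxy
    have hne : (u₁ : En n) - (u₂ : En n) ≠ 0 := by
      intro hzero
      apply hxy
      have : (u₁ : En n) = u₂ := by
        have := sub_eq_zero.1 hzero; exact this
      rw [Subtype.ext this]
    have hsub : (u₁ : En n) - (u₂ : En n) ∈ Lset := hLsub _ hu₁ _ hu₂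
    have := hδsep _ hsub hne
    calc δ ≤ ‖(u₁ : En n) - (u₂ : En n)‖ := this
      _ = ‖u₁ - u₂‖ := by rw [← hcoenorm]; norm_cast
      _ = ‖e u₁ - e u₂‖ := by rw [← e.map_sub, e.norm_map]
      _ = dist (e u₁) (e u₂) := (dist_eq_norm _ _).symm
  have hSEdense : ∀ y : EuclideanSpace ℝ (Fin d), ∃ x ∈ SE, dist y x ≤ R := by
    intro y
    obtain ⟨w, hwL, hwd⟩ := hRdense ((e.symm y : V.direction) : En n) (e.symm y).2
    refine ⟨e ⟨w, hLdir w hwL⟩, ⟨⟨w, hLdir w hwL⟩, hwL, rfl⟩, ?_⟩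
    have h1 : y = e (e.symm y) := by simp
    calc dist y (e ⟨w, hLdir w hwL⟩) = dist (e (e.symm y)) (e ⟨w, hLdir w hwL⟩) := by rw [← h1]
      _ = dist (e.symm y) (⟨w, hLdir w hwL⟩ : V.direction) := e.dist_map _ _
      _ = ‖(e.symm y) - (⟨w, hLdir w hwL⟩ : V.direction)‖ := dist_eq_norm _ _
      _ = ‖((e.symm y : V.direction) : En n) - w‖ := by rw [← hcoenorm]; norm_cast
      _ ≤ R := hwd
  -- polynomial bounds for the lattice count
  have hPB_L : ∃ a b r₀ : ℝ, 0 < a ∧ 0 < b ∧ 1 ≤ r₀ ∧ ∀ r, r₀ ≤ r →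
      a * r^d ≤ ((Lset ∩ Metric.closedBall 0 r).ncard : ℝ) ∧
      ((Lset ∩ Metric.closedBall 0 r).ncard : ℝ) ≤ b * r^d := by
    refine ⟨1 / (2^d * R^d), 2^d / (δ/3)^d, max (2*R) (max δ 1), by positivity, by positivity,
      le_max_of_le_right (le_max_right _ _), ?_⟩
    intro r hr
    have h2R : 2*R ≤ r := le_trans (le_max_left _ _) hr
    have hδr : δ ≤ r := le_trans (le_max_of_le_right (le_max_left _ _)) hr
    have h1r : 1 ≤ r := le_trans (le_max_of_le_right (le_max_right _ _)) hr
    have hRr : R ≤ r := by linarith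
    obtain ⟨hlow, hhi⟩ := count_bounds SE hδpos hRpos hSEsep hSEdense r hRr
    rw [hcardeq r]
    constructor
    · calc 1 / (2^d * R^d) * r^d = (r/2)^d / R^d := by
            rw [div_pow]; ring
        _ ≤ (r - R)^d / R^d := by
            gcongr <;> linarith
        _ ≤ _ := hlow
    · calc ((SE ∩ Metric.closedBall 0 r).ncard : ℝ) ≤ (r + δ)^d / (δ/3)^d := hhi
        _ ≤ (2*r)^d / (δ/3)^d := by
            gcongr <;> linarith
        _ = 2^d / (δ/3)^d * r^d := by rw [mul_pow]; ring
  -- the stabilizer K₀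
  set K₀ : Set (Isom n) := {k | k ∈ G ∧ vg k = 0} with hK₀
  have hK₀fin : K₀.Finite := by
    apply (hfinNV 0).subset
    intro k hk
    exact ⟨hk.1, by rw [hk.2]; simp⟩
  have hK₀ne : K₀.Nonempty := ⟨1, one_mem G, hvg_one⟩
  have hK₀pos : 0 < (K₀.ncard : ℝ) := by
    have := (Set.ncard_pos hK₀fin).2 hK₀ne
    exact_mod_cast this
  -- NV vs lattice count
  have hNV_low : ∀ r : ℝ, ((Lset ∩ Metric.closedBall 0 r).ncard : ℝ) ≤ ((sNV r).ncard : ℝ) := by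
    intro r
    rw [hLball r]
    exact_mod_cast Set.ncard_image_le (hfinNV r)
  have hNV_hi : ∀ r : ℝ, ((sNV r).ncard : ℝ)
      ≤ (K₀.ncard : ℝ) * ((Lset ∩ Metric.closedBall 0 r).ncard : ℝ) := by
    intro r
    have hσ : ∀ w ∈ Lset, ∃ g, g ∈ G ∧ vg g = w := fun w hw => hw
    have hσ'ex : ∃ σ' : En n → Isom n, ∀ w ∈ Lset, σ' w ∈ G ∧ vg (σ' w) = w := by
      choose σ hσG hσv using hσ
      refine ⟨fun w => if h : w ∈ Lset then σ w h else 1, fun w hw => ?_⟩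
      simp only [dif_pos hw]
      exact ⟨hσG w hw, hσv w hw⟩
    obtain ⟨σ', hσ'⟩ := hσ'ex
    have hmap : ∀ γ ∈ sNV r, (vg γ, (σ' (vg γ))⁻¹ * γ)
        ∈ (Lset ∩ Metric.closedBall 0 r) ×ˢ K₀ := by
      intro γ hγ
      have hγG := hγ.1
      have hwL : vg γ ∈ Lset := ⟨γ, hγG, rfl⟩
      constructor
      · exact ⟨hwL, by rw [Metric.mem_closedBall, dist_zero_right]; exact hγ.2⟩
      · have hg₀G : σ' (vg γ) ∈ G := (hσ' _ hwL).1
        have hg₀v : vg (σ' (vg γ)) = vg γ := (hσ' _ hwL).2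
        refine ⟨mul_mem (inv_mem hg₀G) hγG, ?_⟩
        rw [hvg_mul _ (inv_mem hg₀G) _ hγG, hvg_inv _ hg₀G, hg₀v]
        abel
    have hinj : Set.InjOn (fun γ => (vg γ, (σ' (vg γ))⁻¹ * γ)) (sNV r) := by
      intro γ₁ h₁ γ₂ h₂ heq
      simp only [Prod.mk.injEq] at heq
      obtain ⟨he1, he2⟩ := heq
      rw [he1] at he2
      exact mul_left_cancel he2
    have hfinprod : ((Lset ∩ Metric.closedBall 0 r) ×ˢ K₀).Finite :=
      (hfinL r).prod hK₀fin
    have := Set.ncard_le_ncard_of_injOn _ hmap hinj hfinprod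
    rw [ncard_prod''] at this
    calc ((sNV r).ncard : ℝ)
        ≤ ((Lset ∩ Metric.closedBall 0 r).ncard : ℝ) * (K₀.ncard : ℝ) := by exact_mod_cast this
      _ = (K₀.ncard : ℝ) * ((Lset ∩ Metric.closedBall 0 r).ncard : ℝ) := by ring
  have hPB_NV : ∃ a b r₀ : ℝ, 0 < a ∧ 0 < b ∧ 1 ≤ r₀ ∧ ∀ r, r₀ ≤ r →
      a * r^d ≤ ((sNV r).ncard : ℝ) ∧ ((sNV r).ncard : ℝ) ≤ b * r^d := by
    apply polyBound_sandwich (le_refl 0) hK₀pos hPB_L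
    · intro r _
      rw [sub_zero]
      exact hNV_low r
    · intro r _
      rw [add_zero]
      exact hNV_hi r
  -- NG bounds
  have hNG_low : ∀ r : ℝ, 1 ≤ r → ((sNV (r - c)).ncard : ℝ) ≤ ((sG r).ncard : ℝ) := by
    intro r _
    have hsub : sNV (r - c) ⊆ sG r := by
      intro γ hγ
      refine ⟨hγ.1, ?_⟩
      rw [htran]
      calc ‖γ 0‖ ≤ ‖vg γ‖ + 2*‖p‖ := htv1 γ
        _ ≤ (r - c) + c := by rw [hc]; have := hγ.2; linarith
        _ = r := by ring
    exact_mod_cast Set.ncard_le_ncard hsub (hfinG r)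
  have hNG_hi : ∀ r : ℝ, 1 ≤ r → ((sG r).ncard : ℝ) ≤ 1 * ((sNV (r + c)).ncard : ℝ) := by
    intro r _
    rw [one_mul]
    have hsub : sG r ⊆ sNV (r + c) := by
      intro γ hγ
      refine ⟨hγ.1, ?_⟩
      calc ‖vg γ‖ ≤ ‖γ 0‖ + 2*‖p‖ := htv2 γ
        _ ≤ r + c := by rw [hc]; have := hγ.2; rw [htran] at this; linarith
    exact_mod_cast Set.ncard_le_ncard hsub (hfinNV (r + c))
  have hPB_NG : ∃ a b r₀ : ℝ, 0 < a ∧ 0 < b ∧ 1 ≤ r₀ ∧ ∀ r, r₀ ≤ r →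
      a * r^d ≤ ((sG r).ncard : ℝ) ∧ ((sG r).ncard : ℝ) ≤ b * r^d := by
    exact polyBound_sandwich hc0 one_pos hPB_NV hNG_low hNG_hi
  -- Γ bounds via finite index
  have hQfin : Finite (↥Γ ⧸ (G.subgroupOf Γ)) := by
    have : Nat.card (↥Γ ⧸ (G.subgroupOf Γ)) ≠ 0 := hfin
    by_contra hinf
    rw [not_finite_iff_infinite] at hinf
    exact this (Nat.card_eq_zero_of_infinite)
  set m : ℕ := Nat.card (↥Γ ⧸ (G.subgroupOf Γ)) with hm
  have hmpos : 0 < (m : ℝ) := by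
    have : m ≠ 0 := hfin
    exact_mod_cast Nat.pos_of_ne_zero this
  set out : (↥Γ ⧸ (G.subgroupOf Γ)) → ↥Γ := Quotient.out with hout
  have hCex : ∃ C : ℝ, 0 ≤ C ∧ ∀ q, ‖((out q : ↥Γ) : Isom n) 0‖ ≤ C := by
    obtain ⟨C₁, hC₁⟩ := (Set.finite_range (fun q => ‖((out q : ↥Γ) : Isom n) 0‖)).bddAbove
    refine ⟨max C₁ 0, le_max_right _ _, fun q => ?_⟩
    exact le_trans (hC₁ (Set.mem_range_self q)) (le_max_left _ _)
  obtain ⟨C, hC0, hC⟩ := hCex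
  have hdecomp : ∀ (γ : Isom n) (hγ : γ ∈ Γ),
      (((out (QuotientGroup.mk ⟨γ, hγ⟩) : ↥Γ) : Isom n))⁻¹ * γ ∈ G := by
    intro γ hγ
    have hsub : (out (QuotientGroup.mk ⟨γ, hγ⟩))⁻¹ * ⟨γ, hγ⟩ ∈ G.subgroupOf Γ := by
      rw [← QuotientGroup.eq]
      exact Quotient.out_eq' _
    have := Subgroup.mem_subgroupOf.1 hsub
    simpa using this
  have hNΓ_hi : ∀ r : ℝ, 1 ≤ r → ((sΓ r).ncard : ℝ) ≤ (m : ℝ) * ((sG (r + C)).ncard : ℝ) := by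
    intro r _
    set f : Isom n → (↥Γ ⧸ (G.subgroupOf Γ)) × Isom n := fun γ =>
      if hγ : γ ∈ Γ then (QuotientGroup.mk ⟨γ, hγ⟩,
        (((out (QuotientGroup.mk ⟨γ, hγ⟩) : ↥Γ) : Isom n))⁻¹ * γ) else (QuotientGroup.mk (1 : ↥Γ), 1) with hf
    have hmap : ∀ γ ∈ sΓ r, f γ ∈ (Set.univ : Set (↥Γ ⧸ (G.subgroupOf Γ))) ×ˢ sG (r + C) := by
      intro γ hγ
      obtain ⟨hγΓ, hγr⟩ := hγ
      rw [hf]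
      simp only [hγΓ, dif_pos]
      refine ⟨Set.mem_univ _, hdecomp γ hγΓ, ?_⟩
      set t : Isom n := ((out (QuotientGroup.mk ⟨γ, hγΓ⟩) : ↥Γ) : Isom n) with ht
      rw [htran]
      have h1 : (t⁻¹ * γ) 0 = t⁻¹ (γ 0) := rfl
      have h2 : t⁻¹ (t 0) = 0 := t.symm_apply_apply 0
      calc ‖(t⁻¹ * γ) 0‖ = dist (t⁻¹ (γ 0)) 0 := by rw [h1, dist_zero_right]
        _ = dist (t⁻¹ (γ 0)) (t⁻¹ (t 0)) := by rw [h2]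
        _ = dist (γ 0) (t 0) := (t⁻¹ : Isom n).dist_eq _ _
        _ ≤ ‖γ 0‖ + ‖t 0‖ := dist_le_norm_add_norm _ _
        _ ≤ r + C := by
            have h3 : ‖γ 0‖ ≤ r := by rw [htran] at hγr; exact hγr
            exact add_le_add h3 (hC _)
    have hinj : Set.InjOn f (sΓ r) := by
      intro γ₁ h₁ γ₂ h₂ heq
      rw [hf] at heq
      simp only [h₁.1, h₂.1, dif_pos] at heq
      have he1 : (QuotientGroup.mk (⟨γ₁, h₁.1⟩ : ↥Γ) : ↥Γ ⧸ (G.subgroupOf Γ))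
          = QuotientGroup.mk (⟨γ₂, h₂.1⟩ : ↥Γ) := congrArg Prod.fst heq
      have he2 : (((out (QuotientGroup.mk ⟨γ₁, h₁.1⟩) : ↥Γ) : Isom n))⁻¹ * γ₁
          = (((out (QuotientGroup.mk ⟨γ₂, h₂.1⟩) : ↥Γ) : Isom n))⁻¹ * γ₂ :=
        congrArg Prod.snd heq
      rw [he1] at he2
      exact mul_left_cancel he2
    have hfinprod : ((Set.univ : Set (↥Γ ⧸ (G.subgroupOf Γ))) ×ˢ sG (r + C)).Finite :=
      Set.finite_univ.prod (hfinG (r + C))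
    have hle := Set.ncard_le_ncard_of_injOn f hmap hinj hfinprod
    rw [ncard_prod'', Set.ncard_univ] at hle
    exact_mod_cast hle
  have hNΓ_low : ∀ r : ℝ, 1 ≤ r → ((sG (r - C)).ncard : ℝ) ≤ ((sΓ r).ncard : ℝ) := by
    intro r _
    have hsub : sG (r - C) ⊆ sΓ r := by
      intro γ hγ
      exact ⟨hpair.le hγ.1, by have := hγ.2; linarith⟩
    exact_mod_cast Set.ncard_le_ncard hsub (hfinΓ r)
  have hPB_NΓ : ∃ a b r₀ : ℝ, 0 < a ∧ 0 < b ∧ 1 ≤ r₀ ∧ ∀ r, r₀ ≤ r →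
      a * r^d ≤ ((sΓ r).ncard : ℝ) ∧ ((sΓ r).ncard : ℝ) ≤ b * r^d := by
    exact polyBound_sandwich hC0 hmpos hPB_NG hNΓ_low hNΓ_hi
  -- identify the counting functions
  have hNCΓ : (fun r : ℝ => (NCount Γ r : ℝ)) = fun r => ((sΓ r).ncard : ℝ) := rfl
  have hNCG : (fun r : ℝ => (NCount G r : ℝ)) = fun r => ((sG r).ncard : ℝ) := rfl
  have hNVC : (fun r : ℝ => (NVCount G V r : ℝ)) = fun r => ((sNV r).ncard : ℝ) := by
    funext r
    congr 1
    unfold NVCount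
    congr 1
    ext γ
    constructor
    · rintro ⟨hγ, v, hv, hvr⟩
      refine ⟨hγ, ?_⟩
      have h1 := hv p hp
      have : vg γ = v := by rw [hvg]; simp only; rw [h1]; abel
      rwa [this]
    · rintro ⟨hγ, hr⟩
      exact ⟨hγ, vg γ, fun x hx => hvG γ hγ x hx, hr⟩
  have thΓ := isTheta_of_polyBound hPB_NΓ
  have thG := isTheta_of_polyBound hPB_NG
  have thNV := isTheta_of_polyBound hPB_NV
  rw [hNCΓ, hNCG, hNVC]
  exact ⟨thΓ.trans thG.symm, thG.trans thNV.symm, thNV⟩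
end
end

section
/- Let Γ be a discrete subgroup of E(n), and let A = λA′ where A′ ∈ O(n) and 0 < λ ≤ 1. Suppose that AΓA⁻¹ ⊆ Γ, where AγA⁻¹ denotes the isometry x ↦ A(γ(A⁻¹x)). Then AΓA⁻¹ = Γ. -/
open Metric Filter MeasureTheory Asymptotics

noncomputable section

open Bornology in
lemma sep_finite' {E : Type*} [MetricSpace E] [ProperSpace E] {T : Set E}
    (hB : IsBounded T) {ε : ℝ} (hε : 0 < ε)
    (hsep : T.Pairwise fun x y => ε ≤ dist x y) : T.Finite := by
  have htb : TotallyBounded T := hB.isCompact_closure.totallyBounded.subset subset_closure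
  obtain ⟨t, htf, hcov⟩ := (totallyBounded_iff.mp htb) (ε / 2) (by linarith)
  have hsub : T ⊆ ⋃ y ∈ t, T ∩ ball y (ε / 2) := by
    intro x hx
    obtain ⟨y, hy, hxy⟩ := Set.mem_iUnion₂.mp (hcov hx)
    exact Set.mem_iUnion₂.mpr ⟨y, hy, hx, hxy⟩
  refine Set.Finite.subset (Set.Finite.biUnion htf fun y _ => Set.Subsingleton.finite ?_) hsub
  intro a ha b hb
  by_contra hab
  have d1 := mem_ball.mp ha.2
  have d2 := mem_ball.mp hb.2
  have ht : dist a b ≤ dist a y + dist y b := dist_triangle a y b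
  rw [dist_comm y b] at ht
  linarith [hsep ha.1 hb.1 hab]

lemma euclid_decomp' {n : ℕ} (x : En n) :
    x = ∑ i, x i • EuclideanSpace.single i (1:ℝ) := by
  have := (EuclideanSpace.basisFun (Fin n) ℝ).toBasis.sum_repr x
  simp only [OrthonormalBasis.coe_toBasis_repr_apply, EuclideanSpace.basisFun_repr,
    OrthonormalBasis.coe_toBasis, EuclideanSpace.basisFun_apply] at this
  exact this.symm

lemma euclid_coord_le' {n : ℕ} (x : En n) (i : Fin n) : |x i| ≤ ‖x‖ := by
  have h := abs_real_inner_le_norm (EuclideanSpace.single i (1:ℝ)) x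
  rw [EuclideanSpace.inner_single_left, EuclideanSpace.norm_single] at h
  simpa using h

/-- Key estimate: the displacement between two isometries at a point of the unit ball is
controlled by their values at `0` and the standard basis vectors. -/
lemma isom_dist_le {n : ℕ} (δ δ' : Isom n) (x : En n) (hx : ‖x‖ ≤ 1) :
    dist (δ x) (δ' x) ≤
      (∑ i : Fin n, (dist (δ (EuclideanSpace.single i (1:ℝ))) (δ' (EuclideanSpace.single i 1))
        + dist (δ 0) (δ' 0))) + dist (δ 0) (δ' 0) := by
  set E : Fin n → En n := fun i => EuclideanSpace.single i (1:ℝ) with hE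
  set L := δ.toRealLinearIsometryEquiv with hL
  set L' := δ'.toRealLinearIsometryEquiv with hL'
  have happ : ∀ y : En n, (L : En n → En n) y = δ y - δ 0 := fun y => by
    simp [hL]
  have happ' : ∀ y : En n, (L' : En n → En n) y = δ' y - δ' 0 := fun y => by
    simp [hL']
  have hdecomp : (L : En n → En n) x - L' x = ∑ i, x i • ((L : En n → En n) (E i) - L' (E i)) := by
    have h1 : (L : En n → En n) x = ∑ i, x i • (L : En n → En n) (E i) := by
      conv_lhs => rw [euclid_decomp' x]
      rw [map_sum]
      simp [hE]
    have h2 : (L' : En n → En n) x = ∑ i, x i • (L' : En n → En n) (E i) := by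
      conv_lhs => rw [euclid_decomp' x]
      rw [map_sum]
      simp [hE]
    rw [h1, h2, ← Finset.sum_sub_distrib]
    simp [smul_sub]
  have hsplit : δ x - δ' x = ((L : En n → En n) x - L' x) + (δ 0 - δ' 0) := by
    have e1 := happ x
    have e2 := happ' x
    have : δ x = (L : En n → En n) x + δ 0 := by rw [e1]; abel
    have h2 : δ' x = (L' : En n → En n) x + δ' 0 := by rw [e2]; abel
    rw [this, h2]; abel
  rw [dist_eq_norm, hsplit]
  refine le_trans (norm_add_le _ _) ?_
  rw [dist_eq_norm]
  gcongr
  rw [hdecomp]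
  refine le_trans (norm_sum_le _ _) ?_
  apply Finset.sum_le_sum
  intro i _
  rw [norm_smul]
  have hxi : ‖x i‖ ≤ 1 := le_trans (by rw [Real.norm_eq_abs]; exact euclid_coord_le' x i) hx
  have hnorm : ‖(L : En n → En n) (E i) - L' (E i)‖ ≤
      dist (δ (E i)) (δ' (E i)) + dist (δ 0) (δ' 0) := by
    rw [happ, happ', dist_eq_norm, dist_eq_norm]
    have : δ (E i) - δ 0 - (δ' (E i) - δ' 0) = (δ (E i) - δ' (E i)) - (δ 0 - δ' 0) := by abel
    rw [this]
    exact norm_sub_le _ _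
  calc ‖x i‖ * ‖(L : En n → En n) (E i) - L' (E i)‖
      ≤ 1 * (dist (δ (E i)) (δ' (E i)) + dist (δ 0) (δ' 0)) := by
        apply mul_le_mul hxi hnorm (norm_nonneg _) zero_le_one
    _ = _ := one_mul _

/-- Let `Γ ≤ E(n)` be discrete and `A = λA'` a linear conformal bijection
with `A' ∈ O(n)` and `0 < λ ≤ 1`. If `AΓA⁻¹ ⊆ Γ`, then `AΓA⁻¹ = Γ`. -/
theorem conjugation_nonexpanding_surjective {n : ℕ} (Γ : Subgroup (Isom n))
    (hΓ : IsDiscreteSubgroup Γ) (A : En n ≃ₗ[ℝ] En n) (lam : ℝ)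
    (hlam : 0 < lam) (hlam1 : lam ≤ 1) (hconf : ∀ x : En n, ‖A x‖ = lam * ‖x‖)
    (hconj : ∀ γ ∈ Γ, ∃ γ' ∈ Γ, ∀ x : En n, γ' x = A (γ (A.symm x))) :
    ∀ γ ∈ Γ, ∃ γ₀ ∈ Γ, ∀ x : En n, γ x = A (γ₀ (A.symm x)) := by
  intro γ hγ
  obtain ⟨ε, hε, hdisc⟩ := hΓ
  set E : Fin n → En n := fun i => EuclideanSpace.single i (1:ℝ) with hE
  set S : Set (Isom n) := {δ : Isom n | δ ∈ Γ ∧ ‖δ 0‖ ≤ ‖γ 0‖} with hS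
  set F : Isom n → (En n) × (Fin n → En n) := fun δ => (δ 0, fun i => δ (E i)) with hF
  -- component bounds for the distance of values of `F`
  have hD0 : ∀ δ δ' : Isom n, dist (δ 0) (δ' 0) ≤ dist (F δ) (F δ') := by
    intro δ δ'
    rw [hF, Prod.dist_eq]
    exact le_max_left _ _
  have hDi : ∀ δ δ' : Isom n, ∀ i : Fin n,
      dist (δ (E i)) (δ' (E i)) ≤ dist (F δ) (F δ') := by
    intro δ δ' i
    refine le_trans (dist_le_pi_dist (fun j => δ (E j)) (fun j => δ' (E j)) i) ?_
    rw [hF, Prod.dist_eq]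
    exact le_max_right _ _
  -- separation of values of `F` on `S`
  have hsep : ∀ δ ∈ S, ∀ δ' ∈ S, δ ≠ δ' → ε ≤ (2 * n + 1) * dist (F δ) (F δ') := by
    intro δ hδ δ' hδ' hne
    have hmem : δ'⁻¹ * δ ∈ Γ := mul_mem (inv_mem hδ'.1) hδ.1
    have hne1 : δ'⁻¹ * δ ≠ 1 := by
      intro h
      exact hne (by rwa [inv_mul_eq_one, eq_comm] at h)
    obtain ⟨x, hx1, hx2⟩ := hdisc _ hmem hne1
    have hdd : dist ((δ'⁻¹ * δ) x) x = dist (δ x) (δ' x) := by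
      have h1 : (δ'⁻¹ * δ) x = δ'.symm (δ x) := rfl
      rw [h1, ← δ'.symm.dist_eq (δ x) (δ' x), δ'.symm_apply_apply]
    rw [hdd] at hx2
    have hkey := isom_dist_le δ δ' x hx1
    have hbound : (∑ i : Fin n, (dist (δ (E i)) (δ' (E i)) + dist (δ 0) (δ' 0)))
        + dist (δ 0) (δ' 0) ≤ (2 * n + 1) * dist (F δ) (F δ') := by
      have h1 : ∀ i : Fin n, dist (δ (E i)) (δ' (E i)) + dist (δ 0) (δ' 0)
          ≤ 2 * dist (F δ) (F δ') := fun i => by linarith [hDi δ δ' i, hD0 δ δ']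
      calc (∑ i : Fin n, (dist (δ (E i)) (δ' (E i)) + dist (δ 0) (δ' 0))) + dist (δ 0) (δ' 0)
          ≤ (∑ _i : Fin n, 2 * dist (F δ) (F δ')) + dist (F δ) (F δ') := by
            gcongr
            · exact h1 _
            · exact hD0 δ δ'
        _ = (2 * n + 1) * dist (F δ) (F δ') := by
            rw [Finset.sum_const, Finset.card_univ, Fintype.card_fin]
            push_cast; ring
    exact le_trans hx2 (le_trans hkey hbound)
  -- `F '' S` is bounded
  have him_bdd : Bornology.IsBounded (F '' S) := by
    apply (Metric.isBounded_closedBall (x := (0 : (En n) × (Fin n → En n)))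
      (r := ‖γ 0‖ + 1)).subset
    rintro p ⟨δ, hδ, rfl⟩
    rw [Metric.mem_closedBall, dist_zero_right, hF, Prod.norm_def]
    have h0γ : (0:ℝ) ≤ ‖γ 0‖ := norm_nonneg _
    apply max_le
    · simp only
      linarith [hδ.2]
    · rw [pi_norm_le_iff_of_nonneg (by linarith)]
      intro i
      have h1 : ‖δ (E i) - δ 0‖ = 1 := by
        rw [← dist_eq_norm, δ.dist_eq (E i) 0, dist_zero_right, hE]
        simp [EuclideanSpace.norm_single]
      calc ‖δ (E i)‖ ≤ ‖δ (E i) - δ 0‖ + ‖δ 0‖ := by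
            have := norm_add_le (δ (E i) - δ 0) (δ 0); simpa using this
        _ ≤ 1 + ‖γ 0‖ := by rw [h1]; linarith [hδ.2]
        _ = ‖γ 0‖ + 1 := by ring
  -- `S` is finite
  have hpos : (0:ℝ) < 2 * n + 1 := by positivity
  have hinjF : Set.InjOn F S := by
    intro δ hδ δ' hδ' hFeq
    by_contra hne
    have := hsep δ hδ δ' hδ' hne
    rw [hFeq, dist_self, mul_zero] at this
    linarith
  have him_fin : (F '' S).Finite := by
    refine sep_finite' him_bdd (ε := ε / (2 * n + 1)) (by positivity) ?_
    rintro p ⟨δ, hδ, rfl⟩ q ⟨δ', hδ', rfl⟩ hpq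
    have hne : δ ≠ δ' := fun h => hpq (by rw [h])
    rw [div_le_iff₀ hpos, mul_comm]
    exact hsep δ hδ δ' hδ' hne
  have hSfin : S.Finite := Set.Finite.of_finite_image him_fin hinjF
  -- the conjugation map
  classical
  set φ : Isom n → Isom n := fun δ => if h : δ ∈ Γ then (hconj δ h).choose else 1 with hφ
  have hφ_spec : ∀ δ (h : δ ∈ Γ), φ δ ∈ Γ ∧ ∀ x : En n, (φ δ) x = A (δ (A.symm x)) := by
    intro δ h
    have := (hconj δ h).choose_spec
    rw [hφ]
    simp only [dif_pos h]
    exact ⟨this.1, this.2⟩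
  have hmaps : Set.MapsTo φ S S := by
    intro δ hδ
    obtain ⟨hm, happ⟩ := hφ_spec δ hδ.1
    refine ⟨hm, ?_⟩
    have h0 : (φ δ) 0 = A (δ 0) := by rw [happ 0, map_zero]
    rw [h0, hconf]
    calc lam * ‖δ 0‖ ≤ 1 * ‖δ 0‖ := by
          apply mul_le_mul_of_nonneg_right hlam1 (norm_nonneg _)
      _ = ‖δ 0‖ := one_mul _
      _ ≤ ‖γ 0‖ := hδ.2
  have hinjφ : Set.InjOn φ S := by
    intro δ hδ δ' hδ' heq
    obtain ⟨_, happ⟩ := hφ_spec δ hδ.1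
    obtain ⟨_, happ'⟩ := hφ_spec δ' hδ'.1
    apply IsometryEquiv.ext
    intro y
    have h1 : A (δ (A.symm (A y))) = A (δ' (A.symm (A y))) := by
      rw [← happ (A y), ← happ' (A y), heq]
    rw [A.symm_apply_apply] at h1
    exact A.injective h1
  have hbij := (hSfin.injOn_iff_bijOn_of_mapsTo hmaps).mp hinjφ
  have hγS : γ ∈ S := ⟨hγ, le_refl _⟩
  obtain ⟨δ, hδS, hφδ⟩ := hbij.surjOn hγS
  exact ⟨δ, hδS.1, fun x => by rw [← hφδ]; exact (hφ_spec δ hδS.1).2 x⟩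
end
end
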